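/- For every c > 0 and every ū₀ ∈ [0,1], setting u₁ = V₁(c,ū₀), u₂ = V₂(c,ū₀) and μ̄ = (u₁ − u₂ + 1 + ū₀)/3, one has −1 < u₁ − u₂ < 1, μ̄ ∈ [0,1], and for every u₀ ∈ [0,1] the bound 0 ≤ (μ̄ + (u₁ − u₂) + u₀ + 1)/4 ≤ 1 holds. -/

import Mathlib

/-- Discriminant-type quantity appearing in the Multi-Leader-Follower equilibrium. -/
noncomputable def Delta (c u : ℝ) : ℝ :=
  Real.sqrt ((3 + 3 * c + u) * (36 + 57 * c + 9 * c ^ 2 + u - u ^ 2) / (4 + 3 * c - u))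

/-- Multi-Leader-Follower equilibrium advertisement efficiency of major player 2. -/
noncomputable def V2 (c u : ℝ) : ℝ :=
  (-1 - 3 * c + u + Delta c u) / (2 * (2 + 3 * c))

/-- Multi-Leader-Follower equilibrium advertisement efficiency of major player 1. -/
noncomputable def V1 (c u : ℝ) : ℝ :=
  (1 / (3 + 3 * c + u)) *
    (1 - 2 * u + (1 + 3 * c - u - Delta c u) * (u - 3 * c - 4) / (2 * (2 + 3 * c)))

lemma polyF1 (c u : ℝ) (hc : 0 ≤ c) (hu0 : 0 ≤ u) (hu1 : u ≤ 1) :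
    (2 * u - 1) ^ 2 * ((3 + 3 * c + u) * (36 + 57 * c + 9 * c ^ 2 + u - u ^ 2))
      < (15 + 33 * c + 18 * c ^ 2 - u - 2 * u ^ 2) ^ 2 * (4 + 3 * c - u) := by
  have key : (15 + 33 * c + 18 * c ^ 2 - u - 2 * u ^ 2) ^ 2 * (4 + 3 * c - u)
      - (2 * u - 1) ^ 2 * ((3 + 3 * c + u) * (36 + 57 * c + 9 * c ^ 2 + u - u ^ 2))
      = 224 + 48 * u + 16 * u ^ 4 + 480 * (1 - u ^ 2) + 88 * (1 - u ^ 3)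
        + c * (2448 + 24 * u ^ 4) + 288 * (c * (1 - u)) + 1512 * (c * (1 - u ^ 2))
        + 108 * (c * (1 - u ^ 3))
        + c ^ 2 * (6696 + 36 * u ^ 3) + 1188 * (c ^ 2 * (1 - u)) + 1404 * (c ^ 2 * (1 - u ^ 2))
        + c ^ 3 * 8100 + 1188 * (c ^ 3 * (1 - u)) + 324 * (c ^ 3 * (1 - u ^ 2))
        + c ^ 4 * 4536 + 324 * (c ^ 4 * (1 - u)) + 972 * c ^ 5 := by ring
  have h1 : (0:ℝ) ≤ 1 - u := by linarith
  have h2 : (0:ℝ) ≤ 1 - u ^ 2 := by nlinarith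
  have h3 : (0:ℝ) ≤ 1 - u ^ 3 := by nlinarith
  have h4 : (0:ℝ) ≤ u ^ 4 := by positivity
  have h5 : (0:ℝ) ≤ u ^ 3 := by positivity
  have hc2 : (0:ℝ) ≤ c ^ 2 := by positivity
  have hc3 : (0:ℝ) ≤ c ^ 3 := by positivity
  have hc4 : (0:ℝ) ≤ c ^ 4 := by positivity
  have hc5 : (0:ℝ) ≤ c ^ 5 := by positivity
  nlinarith [key, mul_nonneg hc h4, mul_nonneg hc h1, mul_nonneg hc h2, mul_nonneg hc h3,
    mul_nonneg hc2 h5, mul_nonneg hc2 h1, mul_nonneg hc2 h2,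
    mul_nonneg hc3 h1, mul_nonneg hc3 h2, mul_nonneg hc4 h1, hc5, hc4, hc3, hc2, hc,
    mul_nonneg hc h5]

lemma polyF2 (c u : ℝ) (hc : 0 ≤ c) (hu0 : 0 ≤ u) (hu1 : u ≤ 1) :
    (1 - 2 * u) ^ 2 * ((3 + 3 * c + u) * (36 + 57 * c + 9 * c ^ 2 + u - u ^ 2))
      < (9 + 27 * c + 18 * c ^ 2 + 9 * u + 12 * c * u + 2 * u ^ 2) ^ 2 * (4 + 3 * c - u) := by
  have key : (9 + 27 * c + 18 * c ^ 2 + 9 * u + 12 * c * u + 2 * u ^ 2) ^ 2 * (4 + 3 * c - u)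
      - (1 - 2 * u) ^ 2 * ((3 + 3 * c + u) * (36 + 57 * c + 9 * c ^ 2 + u - u ^ 2))
      = 216 + 808 * u + 32 * u ^ 2 + 136 * (u - u ^ 3) + 16 * (u - u ^ 4)
        + c * (1908 + 3564 * u + 72 * u ^ 2) + 276 * (c * (u - u ^ 3)) + 24 * (c * (u - u ^ 4))
        + c ^ 2 * (5472 + 5616 * u + 108 * u ^ 2) + 108 * (c ^ 2 * (u - u ^ 3))
        + c ^ 3 * (7020 + 3780 * u + 108 * u ^ 2) + c ^ 4 * (4212 + 972 * u)
        + 972 * c ^ 5 := by ring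
  have h1 : (0:ℝ) ≤ u - u ^ 3 := by nlinarith
  have h2 : (0:ℝ) ≤ u - u ^ 4 := by nlinarith
  have h3 : (0:ℝ) ≤ u ^ 2 := by positivity
  have hc2 : (0:ℝ) ≤ c ^ 2 := by positivity
  have hc3 : (0:ℝ) ≤ c ^ 3 := by positivity
  have hc4 : (0:ℝ) ≤ c ^ 4 := by positivity
  have hc5 : (0:ℝ) ≤ c ^ 5 := by positivity
  nlinarith [key, mul_nonneg hc h1, mul_nonneg hc h2, mul_nonneg hc2 h1,
    mul_nonneg hc hu0, mul_nonneg hc h3, mul_nonneg hc2 hu0, mul_nonneg hc2 h3,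
    mul_nonneg hc3 hu0, mul_nonneg hc3 h3, mul_nonneg hc4 hu0, hc5, hc4, hc3, hc2, hc, h1, h2]

set_option maxHeartbeats 1600000 in
lemma diff_bounds (c u : ℝ) (hc : 0 < c) (hu0 : 0 ≤ u) (hu1 : u ≤ 1) :
    -1 < V1 c u - V2 c u ∧ V1 c u - V2 c u < 1 := by
  have hden : (0:ℝ) < 4 + 3 * c - u := by linarith
  have hB : (0:ℝ) < 3 + 3 * c + u := by linarith
  have hQ : (0:ℝ) < 36 + 57 * c + 9 * c ^ 2 + u - u ^ 2 := by nlinarith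
  have harg : 0 ≤ (3 + 3 * c + u) * (36 + 57 * c + 9 * c ^ 2 + u - u ^ 2) / (4 + 3 * c - u) :=
    by positivity
  set s := Delta c u with hsdef
  have hs0 : 0 ≤ s := Real.sqrt_nonneg _
  have hs2 : s ^ 2 * (4 + 3 * c - u)
      = (3 + 3 * c + u) * (36 + 57 * c + 9 * c ^ 2 + u - u ^ 2) := by
    rw [hsdef, Delta, Real.sq_sqrt harg, div_mul_cancel₀ _ hden.ne']
  have hA : (0:ℝ) < 2 * (2 + 3 * c) := by linarith
  have hAB : (0:ℝ) < 2 * (2 + 3 * c) * (3 + 3 * c + u) := by positivity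
  have key : V1 c u - V2 c u
      = (3 + 3 * c - 5 * u - 6 * c * u - 2 * u ^ 2 + (1 - 2 * u) * s)
        / (2 * (2 + 3 * c) * (3 + 3 * c + u)) := by
    rw [V1, V2, ← hsdef]
    field_simp
    ring
  have hu2 : u ^ 2 ≤ 1 := by nlinarith
  constructor
  · -- -1 < D
    rw [key, neg_lt, ← neg_div, div_lt_one hAB]
    rcases le_or_gt 0 (1 - 2 * u) with h | h
    · nlinarith [mul_nonneg h hs0]
    · have hP1 : (0:ℝ) < 15 + 33 * c + 18 * c ^ 2 - u - 2 * u ^ 2 := by nlinarith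
      have hx : (0:ℝ) ≤ (2 * u - 1) * s := mul_nonneg (by linarith) hs0
      have hsq : ((2 * u - 1) * s) ^ 2 < (15 + 33 * c + 18 * c ^ 2 - u - 2 * u ^ 2) ^ 2 := by
        have e : ((2 * u - 1) * s) ^ 2 * (4 + 3 * c - u)
            = (2 * u - 1) ^ 2 * ((3 + 3 * c + u) * (36 + 57 * c + 9 * c ^ 2 + u - u ^ 2)) := by
          rw [mul_pow, mul_assoc, hs2]
        have := polyF1 c u hc.le hu0 hu1
        have h' : ((2 * u - 1) * s) ^ 2 * (4 + 3 * c - u)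
            < (15 + 33 * c + 18 * c ^ 2 - u - 2 * u ^ 2) ^ 2 * (4 + 3 * c - u) := by
          rw [e]; exact this
        exact (mul_lt_mul_iff_of_pos_right hden).mp h'
      have habs : (2 * u - 1) * s < 15 + 33 * c + 18 * c ^ 2 - u - 2 * u ^ 2 := by
        nlinarith [hsq, hx, hP1]
      linarith [habs]
  · -- D < 1
    rw [key, div_lt_one hAB]
    rcases le_or_gt (1 - 2 * u) 0 with h | h
    · nlinarith [mul_nonpos_of_nonpos_of_nonneg h hs0]
    · have hP2 : (0:ℝ) < 9 + 27 * c + 18 * c ^ 2 + 9 * u + 12 * c * u + 2 * u ^ 2 := by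
        nlinarith [mul_nonneg hc.le hu0]
      have hx : (0:ℝ) ≤ (1 - 2 * u) * s := mul_nonneg h.le hs0
      have hsq : ((1 - 2 * u) * s) ^ 2
          < (9 + 27 * c + 18 * c ^ 2 + 9 * u + 12 * c * u + 2 * u ^ 2) ^ 2 := by
        have e : ((1 - 2 * u) * s) ^ 2 * (4 + 3 * c - u)
            = (1 - 2 * u) ^ 2 * ((3 + 3 * c + u) * (36 + 57 * c + 9 * c ^ 2 + u - u ^ 2)) := by
          rw [mul_pow, mul_assoc, hs2]
        have := polyF2 c u hc.le hu0 hu1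
        have h' : ((1 - 2 * u) * s) ^ 2 * (4 + 3 * c - u)
            < (9 + 27 * c + 18 * c ^ 2 + 9 * u + 12 * c * u + 2 * u ^ 2) ^ 2
              * (4 + 3 * c - u) := by
          rw [e]; exact this
        exact (mul_lt_mul_iff_of_pos_right hden).mp h'
      have habs : (1 - 2 * u) * s
          < 9 + 27 * c + 18 * c ^ 2 + 9 * u + 12 * c * u + 2 * u ^ 2 := by
        nlinarith [hsq, hx, hP2]
      linarith [habs]

theorem stmt_17 (c ubar₀ : ℝ) (hc : 0 < c) (h₀ : ubar₀ ∈ Set.Icc (0 : ℝ) 1) :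
    -1 < V1 c ubar₀ - V2 c ubar₀ ∧ V1 c ubar₀ - V2 c ubar₀ < 1 ∧
    (V1 c ubar₀ - V2 c ubar₀ + 1 + ubar₀) / 3 ∈ Set.Icc (0 : ℝ) 1 ∧
    ∀ u₀ ∈ Set.Icc (0 : ℝ) 1,
      0 ≤ ((V1 c ubar₀ - V2 c ubar₀ + 1 + ubar₀) / 3
            + (V1 c ubar₀ - V2 c ubar₀) + u₀ + 1) / 4 ∧
      ((V1 c ubar₀ - V2 c ubar₀ + 1 + ubar₀) / 3
            + (V1 c ubar₀ - V2 c ubar₀) + u₀ + 1) / 4 ≤ 1 := by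
  obtain ⟨hu0, hu1⟩ := h₀
  obtain ⟨hd1, hd2⟩ := diff_bounds c ubar₀ hc hu0 hu1
  refine ⟨hd1, hd2, ⟨by linarith, by linarith⟩, ?_⟩
  intro u₀ ⟨h0, h1⟩
  constructor <;> linarith
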